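/- arXiv:1402.6539 — 2 statements merged into one kernel-verified Lean document; each statement's English description precedes it below -/
import Mathlib

section
/- Let n ∈ ℕ, n ≥ 1, and fix x ≥ 1. Then the function λ ↦ u_n(x; λ) = (P_n^{(λ)})'(x)/P_n^{(λ)}(x) is monotone decreasing on (-1/2, ∞): if -1/2 < λ₁ ≤ λ₂, then u_n(x; λ₂) ≤ u_n(x; λ₁). -/
/-- Chebyshev polynomials of the first kind (as real functions):
`T_0 = 1`, `T_1 = x`, `T_{n+2}(x) = 2x T_{n+1}(x) - T_n(x)`. -/
noncomputable def chebT : ℕ → ℝ → ℝ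
  | 0 => fun _ => 1
  | 1 => fun x => x
  | n + 2 => fun x => 2 * x * chebT (n + 1) x - chebT n x

/-- The ultraspherical (Gegenbauer) polynomials for `lam ≠ 0`, via
`P_0 = 1`, `P_1 = 2λx`, `(n+1)P_{n+1}(x) = 2(n+λ)x P_n(x) - (n+2λ-1)P_{n-1}(x)`. -/
noncomputable def gegenRec (lam : ℝ) : ℕ → ℝ → ℝ
  | 0 => fun _ => 1
  | 1 => fun x => 2 * lam * x
  | n + 2 => fun x =>
      (2 * ((n : ℝ) + 1 + lam) * x * gegenRec lam (n + 1) x -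
        ((n : ℝ) + 2 * lam) * gegenRec lam n x) / ((n : ℝ) + 2)

/-- The `n`-th ultraspherical polynomial `P_n^{(λ)}`; for `λ = 0` it is taken to be the
Chebyshev polynomial of the first kind `T_n`. -/
noncomputable def ultra (lam : ℝ) (n : ℕ) : ℝ → ℝ :=
  if lam = 0 then chebT n else gegenRec lam n

/-- The ratio `u_n(x) = (P_n^{(λ)})'(x) / P_n^{(λ)}(x)`. -/
noncomputable def uRatio (lam : ℝ) (n : ℕ) (x : ℝ) : ℝ :=
  deriv (ultra lam n) x / ultra lam n x

open Finset

noncomputable def Rr (β : ℝ) (j : ℕ) : ℝ := ∏ i ∈ Finset.range j, (β - (i : ℝ))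
noncomputable def bco (α : ℝ) (m s : ℕ) : ℝ :=
  Rr ((m : ℝ) + α) s * Rr ((m : ℝ) + α) (m - s) /
    ((s.factorial : ℝ) * ((m - s).factorial : ℝ))

lemma Rr_zero (β : ℝ) : Rr β 0 = 1 := by simp [Rr]
lemma Rr_one (β : ℝ) : Rr β 1 = β := by simp [Rr]
lemma Rr_succ (β : ℝ) (j : ℕ) : Rr β (j + 1) = Rr β j * (β - j) := by
  simp [Rr, Finset.prod_range_succ]
lemma Rr_up (β : ℝ) (j : ℕ) : Rr (β + 1) (j + 1) = (β + 1) * Rr β j := by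
  rw [Rr, Finset.prod_range_succ']
  rw [show (β + 1 - ((0:ℕ):ℝ)) = β + 1 by push_cast; ring]
  rw [mul_comm]
  congr 1
  apply Finset.prod_congr rfl
  intro i _
  push_cast
  ring

/-- Normalized ultraspherical polynomial. -/
noncomputable def Sf (α : ℝ) (m : ℕ) (x : ℝ) : ℝ :=
  ∑ s ∈ Finset.range (m + 1), bco α m s * (x - 1) ^ s * (x + 1) ^ (m - s)

/-- Derivative of a basis monomial. -/
noncomputable def dmon (m s : ℕ) (x : ℝ) : ℝ :=
  (s : ℝ) * (x - 1) ^ (s - 1) * (x + 1) ^ (m - s) +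
    ((m - s : ℕ) : ℝ) * (x - 1) ^ s * (x + 1) ^ (m - s - 1)

/-- Derivative of `Sf` (with respect to `x`). -/
noncomputable def Sd (α : ℝ) (m : ℕ) (x : ℝ) : ℝ :=
  ∑ s ∈ Finset.range (m + 1), bco α m s * dmon m s x

lemma Rr_add (β : ℝ) (a b : ℕ) :
    Rr β (a + b) = Rr β a * ∏ i ∈ Finset.range b, (β - ((a + i : ℕ) : ℝ)) := by
  rw [Rr, Finset.prod_range_add, Rr]

lemma Rr_pos {α : ℝ} (hα : -1 < α) (m j : ℕ) (hj : j ≤ m) :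
    0 < Rr ((m : ℝ) + α) j := by
  apply Finset.prod_pos
  intro i hi
  simp only [Finset.mem_range] at hi
  have : (i : ℝ) + 1 ≤ (m : ℝ) := by
    have : i + 1 ≤ m := by omega
    exact_mod_cast this
  linarith

lemma bco_pos {α : ℝ} (hα : -1 < α) (m s : ℕ) (hs : s ≤ m) : 0 < bco α m s := by
  apply div_pos
  · exact mul_pos (Rr_pos hα m s hs) (Rr_pos hα m (m - s) (by omega))
  · positivity

lemma bco_symm (α : ℝ) (m s : ℕ) (hs : s ≤ m) : bco α m (m - s) = bco α m s := by
  unfold bco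
  rw [show m - (m - s) = s by omega]
  ring

lemma Sf_pos {α : ℝ} (hα : -1 < α) (m : ℕ) {x : ℝ} (hx : 1 ≤ x) : 0 < Sf α m x := by
  unfold Sf
  apply Finset.sum_pos'
  · intro s hs
    simp only [Finset.mem_range] at hs
    have h1 : 0 < bco α m s := bco_pos hα m s (by omega)
    have h2 : (0:ℝ) ≤ (x - 1) ^ s := pow_nonneg (by linarith) s
    have h3 : (0:ℝ) < (x + 1) ^ (m - s) := pow_pos (by linarith) _
    exact mul_nonneg (mul_nonneg h1.le h2) h3.le
  · refine ⟨0, by simp, ?_⟩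
    have h1 : 0 < bco α m 0 := bco_pos hα m 0 (by omega)
    have h3 : (0:ℝ) < (x + 1) ^ (m - 0) := by positivity
    simp only [pow_zero, mul_one]
    exact mul_pos h1 h3

lemma hasDerivAt_Sf (α : ℝ) (m : ℕ) (x : ℝ) :
    HasDerivAt (fun y => Sf α m y) (Sd α m x) x := by
  unfold Sf Sd
  apply HasDerivAt.fun_sum
  intro s hs
  have h1 : HasDerivAt (fun y : ℝ => (y - 1) ^ s) ((s : ℝ) * (x - 1) ^ (s - 1)) x := by
    simpa using ((hasDerivAt_id x).sub_const 1).fun_pow s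
  have h2 : HasDerivAt (fun y : ℝ => (y + 1) ^ (m - s))
      (((m - s : ℕ) : ℝ) * (x + 1) ^ (m - s - 1)) x := by
    simpa using ((hasDerivAt_id x).add_const 1).fun_pow (m - s)
  have h := (h1.fun_mul h2).const_mul (bco α m s)
  simp only [mul_assoc]
  convert h using 1
  case e'_4 => rfl
  simp only [dmon]
  ring

lemma coefId (α : ℝ) (n t : ℕ) (ht : t < n + 3) :
    ((n:ℝ)+2)*(2*α+(n:ℝ)+2) * bco α (n+2) t
      = (α+(n:ℝ)+2)*(2*α+2*(n:ℝ)+3) *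
          ((if t = 0 then 0 else bco α (n+1) (t-1)) + (if t = n+2 then 0 else bco α (n+1) t))
        - (α+(n:ℝ)+2)*(α+(n:ℝ)+1) *
          (((if t ≤ n then bco α n t else 0) - 2*(if 1 ≤ t ∧ t ≤ n+1 then bco α n (t-1) else 0))
            + (if 2 ≤ t then bco α n (t-2) else 0)) := by
  rcases t with _ | t
  · -- t = 0
    rw [if_pos rfl, if_neg (by omega : ¬ (0:ℕ) = n+2), if_pos (Nat.zero_le n),
      if_neg (by omega : ¬ ((1:ℕ) ≤ 0 ∧ (0:ℕ) ≤ n+1)), if_neg (by omega : ¬ (2:ℕ) ≤ 0)]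
    simp only [bco, Nat.sub_zero, Nat.factorial_zero]
    rw [show ((n+2:ℕ):ℝ) + α = (((n:ℕ):ℝ)+α)+1+1 by push_cast; ring,
        show ((n+1:ℕ):ℝ) + α = (((n:ℕ):ℝ)+α)+1 by push_cast; ring]
    simp only [Rr_up]
    simp only [Rr_zero, Rr_one, Nat.factorial_succ]
    push_cast
    field_simp
    ring
  rcases t with _ | s
  · -- t = 1
    rcases n with _ | n'
    · -- n = 0
      rw [if_neg (by omega : ¬ (1:ℕ) = 0), if_neg (by omega : ¬ (1:ℕ) = 0+2),
        if_neg (by omega : ¬ (1:ℕ) ≤ 0), if_pos (by omega : (1:ℕ) ≤ 1 ∧ (1:ℕ) ≤ 0+1),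
        if_neg (by omega : ¬ (2:ℕ) ≤ 1)]
      simp only [bco]
      norm_num [Rr_zero, Rr_one]
      ring
    · -- n = n' + 1
      rw [if_neg (by omega : ¬ (1:ℕ) = 0), if_neg (by omega : ¬ (1:ℕ) = n'+1+2),
        if_pos (by omega : (1:ℕ) ≤ n'+1), if_pos (by omega : (1:ℕ) ≤ 1 ∧ (1:ℕ) ≤ n'+1+1),
        if_neg (by omega : ¬ (2:ℕ) ≤ 1)]
      simp only [bco, show n'+1+2-1 = n'+2 from by omega, show n'+1+1-1 = n'+1 from by omega,
        show n'+1-1 = n' from by omega, show (1:ℕ)-1 = 0 from rfl, Nat.sub_zero]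
      rw [show ((n'+1+2:ℕ):ℝ) + α = ((↑(n'+1):ℝ)+α)+1+1 by push_cast; ring,
          show ((n'+1+1:ℕ):ℝ) + α = ((↑(n'+1):ℝ)+α)+1 by push_cast; ring]
      simp only [Rr_one, Rr_up]
      simp only [Rr_succ, Rr_zero, Rr_one, Nat.factorial_succ, Nat.factorial_zero]
      push_cast
      field_simp
      ring
  · -- t = s + 2
    have hs : s ≤ n := by omega
    rcases (by omega : s + 2 ≤ n ∨ n = s + 1 ∨ n = s) with hc | hc | hc
    · obtain ⟨m, rfl⟩ : ∃ m, n = s + 2 + m := ⟨n - (s+2), by omega⟩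
      rw [if_neg (by omega : ¬ s+2 = 0), if_neg (by omega : ¬ s+2 = s+2+m+2),
        if_pos (by omega : s+2 ≤ s+2+m), if_pos (by omega : (1:ℕ) ≤ s+2 ∧ s+2 ≤ s+2+m+1),
        if_pos (by omega : (2:ℕ) ≤ s+2)]
      simp only [bco, show s+2+m+2-(s+2) = m+2 from by omega,
        show s+2-1 = s+1 from by omega, show s+2-2 = s from by omega,
        show s+2+m+1-(s+1) = m+2 from by omega, show s+2+m+1-(s+2) = m+1 from by omega,
        show s+2+m-(s+2) = m from by omega, show s+2+m-(s+1) = m+1 from by omega,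
        show s+2+m-s = m+2 from by omega]
      rw [show ((s+2+m+2:ℕ):ℝ) + α = ((↑(s+2+m):ℝ)+α)+1+1 by push_cast; ring,
          show ((s+2+m+1:ℕ):ℝ) + α = ((↑(s+2+m):ℝ)+α)+1 by push_cast; ring]
      simp only [Rr_up]
      simp only [Rr_succ, Nat.factorial_succ]
      push_cast
      field_simp
      ring
    · subst hc
      rw [if_neg (by omega : ¬ s+2 = 0), if_neg (by omega : ¬ s+2 = s+1+2),
        if_neg (by omega : ¬ s+2 ≤ s+1), if_pos (by omega : (1:ℕ) ≤ s+2 ∧ s+2 ≤ s+1+1),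
        if_pos (by omega : (2:ℕ) ≤ s+2)]
      simp only [bco, show s+1+2-(s+2) = 1 from by omega, show s+2-1 = s+1 from by omega,
        show s+2-2 = s from by omega, show s+1+1-(s+1) = 1 from by omega,
        show s+1+1-(s+2) = 0 from by omega, show s+1-(s+1) = 0 from by omega,
        show s+1-s = 1 from by omega]
      rw [show ((s+1+2:ℕ):ℝ) + α = ((↑(s+1):ℝ)+α)+1+1 by push_cast; ring,
          show ((s+1+1:ℕ):ℝ) + α = ((↑(s+1):ℝ)+α)+1 by push_cast; ring]
      simp only [Rr_up]
      simp only [Rr_succ, Rr_zero, Rr_one, Nat.factorial_succ, Nat.factorial_zero,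
        Nat.factorial_one]
      push_cast
      field_simp
      ring
    · subst hc
      rw [if_neg (by omega : ¬ n+2 = 0), if_pos rfl,
        if_neg (by omega : ¬ n+2 ≤ n), if_neg (by omega : ¬ ((1:ℕ) ≤ n+2 ∧ n+2 ≤ n+1)),
        if_pos (by omega : (2:ℕ) ≤ n+2)]
      simp only [bco, show n+2-(n+2) = 0 from by omega, show n+2-1 = n+1 from by omega,
        show n+2-2 = n from by omega, show n+1-(n+1) = 0 from by omega,
        show n-n = 0 from by omega]
      rw [show ((n+2:ℕ):ℝ) + α = (((n:ℕ):ℝ)+α)+1+1 by push_cast; ring,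
          show ((n+1:ℕ):ℝ) + α = (((n:ℕ):ℝ)+α)+1 by push_cast; ring]
      simp only [Rr_up]
      simp only [Rr_succ, Rr_zero, Nat.factorial_succ, Nat.factorial_zero]
      push_cast
      field_simp
      ring

-- ===== shift lemmas =====
lemma shift1 (n : ℕ) (f : ℕ → ℝ) (u v : ℝ) :
    ∑ t ∈ Finset.range (n + 3), (if t = 0 then 0 else f (t - 1)) * (u ^ t * v ^ (n + 2 - t))
      = ∑ s ∈ Finset.range (n + 2), f s * (u ^ (s + 1) * v ^ (n + 1 - s)) := by
  rw [Finset.sum_range_succ']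
  simp [Nat.succ_sub_succ]

lemma shift2 (n : ℕ) (f : ℕ → ℝ) (u v : ℝ) :
    ∑ t ∈ Finset.range (n + 3), (if t = n + 2 then 0 else f t) * (u ^ t * v ^ (n + 2 - t))
      = ∑ s ∈ Finset.range (n + 2), f s * (u ^ s * v ^ (n + 2 - s)) := by
  rw [Finset.sum_range_succ]
  simp only [if_pos rfl, if_true, eq_self_iff_true, zero_mul, add_zero]
  apply Finset.sum_congr rfl
  intro s hs
  simp only [Finset.mem_range] at hs
  rw [if_neg (by omega)]

lemma shift3 (n : ℕ) (f : ℕ → ℝ) (u v : ℝ) :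
    ∑ t ∈ Finset.range (n + 3), (if t ≤ n then f t else 0) * (u ^ t * v ^ (n + 2 - t))
      = ∑ s ∈ Finset.range (n + 1), f s * (u ^ s * v ^ (n + 2 - s)) := by
  rw [Finset.sum_range_succ, Finset.sum_range_succ]
  rw [if_neg (by omega), if_neg (by omega)]
  simp only [zero_mul, add_zero]
  apply Finset.sum_congr rfl
  intro s hs
  simp only [Finset.mem_range] at hs
  rw [if_pos (by omega)]

lemma shift4 (n : ℕ) (f : ℕ → ℝ) (u v : ℝ) :
    ∑ t ∈ Finset.range (n + 3), (if 1 ≤ t ∧ t ≤ n + 1 then f (t - 1) else 0) * (u ^ t * v ^ (n + 2 - t))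
      = ∑ s ∈ Finset.range (n + 1), f s * (u ^ (s + 1) * v ^ (n + 1 - s)) := by
  rw [Finset.sum_range_succ]
  rw [if_neg (by omega)]
  simp only [zero_mul, add_zero]
  rw [Finset.sum_range_succ']
  rw [if_neg (by omega)]
  simp only [zero_mul, add_zero]
  apply Finset.sum_congr rfl
  intro s hs
  simp only [Finset.mem_range] at hs
  rw [if_pos (by omega)]
  simp [Nat.succ_sub_succ]

lemma shift5 (n : ℕ) (f : ℕ → ℝ) (u v : ℝ) :
    ∑ t ∈ Finset.range (n + 3), (if 2 ≤ t then f (t - 2) else 0) * (u ^ t * v ^ (n + 2 - t))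
      = ∑ s ∈ Finset.range (n + 1), f s * (u ^ (s + 2) * v ^ (n - s)) := by
  rw [Finset.sum_range_succ']
  rw [if_neg (by omega)]
  simp only [zero_mul, add_zero]
  rw [Finset.sum_range_succ']
  rw [if_neg (by omega)]
  simp only [zero_mul, add_zero]
  apply Finset.sum_congr rfl
  intro s hs
  simp only [Finset.mem_range] at hs
  rw [if_pos (by omega)]
  norm_num [Nat.succ_sub_succ]

lemma two_x_Sf (α : ℝ) (n : ℕ) (x : ℝ) :
    2 * x * Sf α (n + 1) x
      = (∑ s ∈ Finset.range (n + 2), bco α (n + 1) s * ((x - 1) ^ (s + 1) * (x + 1) ^ (n + 1 - s)))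
        + ∑ s ∈ Finset.range (n + 2), bco α (n + 1) s * ((x - 1) ^ s * (x + 1) ^ (n + 2 - s)) := by
  unfold Sf
  rw [Finset.mul_sum, ← Finset.sum_add_distrib]
  apply Finset.sum_congr rfl
  intro s hs
  simp only [Finset.mem_range] at hs
  rw [show n + 2 - s = (n + 1 - s) + 1 by omega, pow_succ]
  ring

lemma four_Sf (α : ℝ) (n : ℕ) (x : ℝ) :
    4 * Sf α n x
      = ((∑ s ∈ Finset.range (n + 1), bco α n s * ((x - 1) ^ s * (x + 1) ^ (n + 2 - s)))
        - 2 * ∑ s ∈ Finset.range (n + 1), bco α n s * ((x - 1) ^ (s + 1) * (x + 1) ^ (n + 1 - s)))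
        + ∑ s ∈ Finset.range (n + 1), bco α n s * ((x - 1) ^ (s + 2) * (x + 1) ^ (n - s)) := by
  unfold Sf
  rw [Finset.mul_sum, Finset.mul_sum, ← Finset.sum_sub_distrib, ← Finset.sum_add_distrib]
  apply Finset.sum_congr rfl
  intro s hs
  simp only [Finset.mem_range] at hs
  rw [show n + 2 - s = (n - s) + 2 by omega, show n + 1 - s = (n - s) + 1 by omega,
    pow_succ, pow_succ, pow_succ]
  ring

lemma Srec (α : ℝ) (n : ℕ) (x : ℝ) :
    ((n:ℝ)+2)*(2*α+(n:ℝ)+2) * Sf α (n+2) x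
      = 2*(α+(n:ℝ)+2) * ((2*α+2*(n:ℝ)+3) * x * Sf α (n+1) x - 2*(α+(n:ℝ)+1) * Sf α n x) := by
  have e1 := two_x_Sf α n x
  have e2 := four_Sf α n x
  have hL : ((n:ℝ)+2)*(2*α+(n:ℝ)+2) * Sf α (n+2) x
      = ∑ t ∈ Finset.range (n+3), (((n:ℝ)+2)*(2*α+(n:ℝ)+2) * bco α (n+2) t)
          * ((x-1)^t * (x+1)^(n+2-t)) := by
    unfold Sf
    rw [Finset.mul_sum]
    apply Finset.sum_congr rfl
    intro t _
    ring
  rw [hL]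
  have step : ∀ t ∈ Finset.range (n+3),
      (((n:ℝ)+2)*(2*α+(n:ℝ)+2) * bco α (n+2) t) * ((x-1)^t * (x+1)^(n+2-t))
      = (α+(n:ℝ)+2)*(2*α+2*(n:ℝ)+3) *
          ((if t = 0 then 0 else bco α (n+1) (t-1)) * ((x-1)^t*(x+1)^(n+2-t)))
        + (α+(n:ℝ)+2)*(2*α+2*(n:ℝ)+3) *
          ((if t = n+2 then 0 else bco α (n+1) t) * ((x-1)^t*(x+1)^(n+2-t)))
        - ((α+(n:ℝ)+2)*(α+(n:ℝ)+1) *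
            ((if t ≤ n then bco α n t else 0) * ((x-1)^t*(x+1)^(n+2-t)))
          - 2*((α+(n:ℝ)+2)*(α+(n:ℝ)+1)) *
            ((if 1 ≤ t ∧ t ≤ n+1 then bco α n (t-1) else 0) * ((x-1)^t*(x+1)^(n+2-t)))
          + (α+(n:ℝ)+2)*(α+(n:ℝ)+1) *
            ((if 2 ≤ t then bco α n (t-2) else 0) * ((x-1)^t*(x+1)^(n+2-t)))) := by
    intro t ht
    rw [coefId α n t (Finset.mem_range.mp ht)]
    ring
  rw [Finset.sum_congr rfl step]
  rw [Finset.sum_sub_distrib, Finset.sum_add_distrib, Finset.sum_add_distrib,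
    Finset.sum_sub_distrib]
  rw [← Finset.mul_sum, ← Finset.mul_sum, ← Finset.mul_sum, ← Finset.mul_sum, ← Finset.mul_sum]
  rw [shift1, shift2, shift3, shift4, shift5]
  linear_combination (-((α+(n:ℝ)+2)*(2*α+2*(n:ℝ)+3))) * e1 + (α+(n:ℝ)+2)*(α+(n:ℝ)+1) * e2


noncomputable def Dg (lam : ℝ) (n : ℕ) : ℝ := ∏ i ∈ Finset.range n, (2*lam + 1 + 2*(i:ℝ))
noncomputable def Ng (lam : ℝ) (n : ℕ) : ℝ := ∏ i ∈ Finset.range n, (2*lam + (i:ℝ))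
noncomputable def Dc (n : ℕ) : ℝ := ∏ i ∈ Finset.range n, (2*(i:ℝ) + 1)
noncomputable def Nc (n : ℕ) : ℝ := ∏ i ∈ Finset.range n, ((i:ℝ) + 1)

lemma gegen_eq' (lam : ℝ) (n : ℕ) (x : ℝ) :
    gegenRec lam n x * Dg lam n = Ng lam n * Sf (lam - 1/2) n x := by
  induction n using Nat.strong_induction_on with
  | _ n ih =>
  match n with
  | 0 => simp [gegenRec, Dg, Ng, Sf, bco, Rr]
  | 1 =>
    simp only [gegenRec, Dg, Ng, Sf, bco]
    rw [Finset.prod_range_one, Finset.prod_range_one, Finset.sum_range_succ,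
      Finset.sum_range_one]
    norm_num [Rr_one, Rr_zero]
    ring
  | (k+2) =>
    have h0 := ih k (by omega)
    have h1 := ih (k+1) (by omega)
    have hS := Srec (lam - 1/2) k x
    have hne1 : ((k:ℝ) + 2) ≠ 0 := by positivity
    have hD1 : Dg lam (k+1) = Dg lam k * (2*lam + 1 + 2*(k:ℝ)) := Finset.prod_range_succ _ k
    have hN1 : Ng lam (k+1) = Ng lam k * (2*lam + (k:ℝ)) := Finset.prod_range_succ _ k
    have hD2 : Dg lam (k+2) = Dg lam (k+1) * (2*lam + 1 + 2*((k:ℝ)+1)) := by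
      rw [show k+2 = (k+1)+1 from rfl, Dg, Dg, Finset.prod_range_succ]
      push_cast
      ring
    have hN2 : Ng lam (k+2) = Ng lam (k+1) * (2*lam + ((k:ℝ)+1)) := by
      rw [show k+2 = (k+1)+1 from rfl, Ng, Ng, Finset.prod_range_succ]
      push_cast
      ring
    show (2 * ((k : ℝ) + 1 + lam) * x * gegenRec lam (k + 1) x -
        ((k : ℝ) + 2 * lam) * gegenRec lam k x) / ((k : ℝ) + 2) * Dg lam (k+2)
      = Ng lam (k+2) * Sf (lam - 1/2) (k+2) x
    rw [div_mul_eq_mul_div, div_eq_iff hne1, hD2, hD1, hN2, hN1]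
    rw [hD1, hN1] at h1
    linear_combination (2*((k:ℝ)+1+lam)*x*(2*lam+1+2*((k:ℝ)+1))) * h1
      - ((k:ℝ)+2*lam)*(2*lam+1+2*(k:ℝ))*(2*lam+1+2*((k:ℝ)+1)) * h0
      - (Ng lam k * (2*lam+(k:ℝ))) * hS

lemma cheb_eq' (n : ℕ) (x : ℝ) :
    chebT n x * Dc n = Nc n * Sf (-(1/2)) n x := by
  induction n using Nat.strong_induction_on with
  | _ n ih =>
  match n with
  | 0 => simp [chebT, Dc, Nc, Sf, bco, Rr]
  | 1 =>
    simp only [chebT, Dc, Nc, Sf, bco]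
    rw [Finset.prod_range_one, Finset.prod_range_one, Finset.sum_range_succ,
      Finset.sum_range_one]
    norm_num [Rr_one, Rr_zero]
    ring
  | (k+2) =>
    have h0 := ih k (by omega)
    have h1 := ih (k+1) (by omega)
    have hS := Srec (-(1/2)) k x
    have hD1 : Dc (k+1) = Dc k * (2*(k:ℝ) + 1) := Finset.prod_range_succ _ k
    have hN1 : Nc (k+1) = Nc k * ((k:ℝ) + 1) := Finset.prod_range_succ _ k
    have hD2 : Dc (k+2) = Dc (k+1) * (2*((k:ℝ)+1) + 1) := by
      rw [show k+2 = (k+1)+1 from rfl, Dc, Dc, Finset.prod_range_succ]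
      push_cast
      ring
    have hN2 : Nc (k+2) = Nc (k+1) * (((k:ℝ)+1) + 1) := by
      rw [show k+2 = (k+1)+1 from rfl, Nc, Nc, Finset.prod_range_succ]
      push_cast
      ring
    show (2 * x * chebT (k + 1) x - chebT k x) * Dc (k+2) = Nc (k+2) * Sf (-(1/2)) (k+2) x
    rw [hD2, hD1, hN2, hN1]
    rw [hD1, hN1] at h1
    linear_combination (2*x*(2*((k:ℝ)+1)+1)) * h1
      - (2*(k:ℝ)+1)*(2*((k:ℝ)+1)+1) * h0
      - (Nc k) * hS

lemma pow_pair {x : ℝ} (hx : 1 ≤ x) {a b : ℕ} (hab : a ≤ b) :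
    (x-1)^b * (x+1)^a ≤ (x-1)^a * (x+1)^b := by
  obtain ⟨c, rfl⟩ : ∃ c, b = a + c := ⟨b - a, by omega⟩
  have h1 : (0:ℝ) ≤ x - 1 := by linarith
  have h2 : (0:ℝ) ≤ x + 1 := by linarith
  have h3 : (x-1)^c ≤ (x+1)^c := pow_le_pow_left₀ h1 (by linarith) c
  have h4 := mul_le_mul_of_nonneg_left h3
    (mul_nonneg (pow_nonneg h1 a) (pow_nonneg h2 a))
  calc (x-1)^(a+c) * (x+1)^a = (x-1)^a * (x+1)^a * (x-1)^c := by rw [pow_add]; ring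
    _ ≤ (x-1)^a * (x+1)^a * (x+1)^c := h4
    _ = (x-1)^a * (x+1)^(a+c) := by rw [pow_add]; ring

lemma delta_nonpos {α₁ α₂ : ℝ} (h1 : -1 < α₁) (h12 : α₁ ≤ α₂) (n j d : ℕ)
    (hsum : j + d + j ≤ n) :
    bco α₂ n (j+d) * bco α₁ n j ≤ bco α₁ n (j+d) * bco α₂ n j := by
  have h2 : -1 < α₂ := lt_of_lt_of_le h1 h12
  unfold bco
  rw [Rr_add ((n:ℝ)+α₂) j d, Rr_add ((n:ℝ)+α₁) j d]
  rw [show n - j = (n - (j+d)) + d by omega]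
  rw [Rr_add ((n:ℝ)+α₂) (n-(j+d)) d, Rr_add ((n:ℝ)+α₁) (n-(j+d)) d]
  set A2 := Rr ((n:ℝ)+α₂) j with hA2
  set A1 := Rr ((n:ℝ)+α₁) j with hA1
  set B2 := Rr ((n:ℝ)+α₂) (n-(j+d)) with hB2
  set B1 := Rr ((n:ℝ)+α₁) (n-(j+d)) with hB1
  set P2 := ∏ i ∈ Finset.range d, (((n:ℝ)+α₂) - ((j + i : ℕ) : ℝ)) with hP2
  set P1 := ∏ i ∈ Finset.range d, (((n:ℝ)+α₁) - ((j + i : ℕ) : ℝ)) with hP1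
  set Q2 := ∏ i ∈ Finset.range d, (((n:ℝ)+α₂) - ((n-(j+d) + i : ℕ) : ℝ)) with hQ2
  set Q1 := ∏ i ∈ Finset.range d, (((n:ℝ)+α₁) - ((n-(j+d) + i : ℕ) : ℝ)) with hQ1
  have hPQ : P2 * Q1 ≤ P1 * Q2 := by
    rw [hP2, hQ1, hP1, hQ2, ← Finset.prod_mul_distrib, ← Finset.prod_mul_distrib]
    apply Finset.prod_le_prod
    · intro i hi
      simp only [Finset.mem_range] at hi
      have hc1 : ((j+i:ℕ):ℝ) + 1 ≤ (n:ℝ) := by exact_mod_cast (by omega : j+i+1 ≤ n)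
      have hc2 : ((n-(j+d)+i:ℕ):ℝ) + 1 ≤ (n:ℝ) := by
        exact_mod_cast (by omega : n-(j+d)+i+1 ≤ n)
      apply mul_nonneg <;> linarith
    · intro i hi
      simp only [Finset.mem_range] at hi
      have huv : ((j+i:ℕ):ℝ) ≤ ((n-(j+d)+i:ℕ):ℝ) := by
        exact_mod_cast (by omega : j+i ≤ n-(j+d)+i)
      nlinarith [mul_nonneg (sub_nonneg.2 h12) (sub_nonneg.2 huv)]
  have hApos : 0 < A2 * B2 * (A1 * B1) := by
    apply mul_pos (mul_pos (Rr_pos h2 n j (by omega)) (Rr_pos h2 n (n-(j+d)) (by omega)))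
      (mul_pos (Rr_pos h1 n j (by omega)) (Rr_pos h1 n (n-(j+d)) (by omega)))
  have hF1 : (0:ℝ) < ((j+d).factorial : ℝ) * ((n-(j+d)).factorial : ℝ) := by positivity
  have hF2 : (0:ℝ) < (j.factorial : ℝ) * ((n-(j+d)+d).factorial : ℝ) := by positivity
  have hG : (0:ℝ) ≤ A2 * B2 * (A1 * B1) / (((j+d).factorial : ℝ) * ((n-(j+d)).factorial : ℝ)
      * ((j.factorial : ℝ) * ((n-(j+d)+d).factorial : ℝ))) := by positivity
  calc A2 * P2 * B2 / (((j+d).factorial:ℝ) * ((n-(j+d)).factorial:ℝ))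
        * (A1 * (B1 * Q1) / ((j.factorial:ℝ) * ((n-(j+d)+d).factorial:ℝ)))
      = A2 * B2 * (A1 * B1) / (((j+d).factorial : ℝ) * ((n-(j+d)).factorial : ℝ)
          * ((j.factorial : ℝ) * ((n-(j+d)+d).factorial : ℝ))) * (P2 * Q1) := by
        ring
    _ ≤ A2 * B2 * (A1 * B1) / (((j+d).factorial : ℝ) * ((n-(j+d)).factorial : ℝ)
          * ((j.factorial : ℝ) * ((n-(j+d)+d).factorial : ℝ))) * (P1 * Q2) :=
        mul_le_mul_of_nonneg_left hPQ hG
    _ = A1 * P1 * B1 / (((j+d).factorial:ℝ) * ((n-(j+d)).factorial:ℝ))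
        * (A2 * (B2 * Q2) / ((j.factorial:ℝ) * ((n-(j+d)+d).factorial:ℝ))) := by
        ring

lemma dmonH1 (j c m : ℕ) (x : ℝ) :
    dmon (j+c+1+m) (j+c+1) x
      = ((j:ℝ)+c+1)*(x-1)^(j+c)*(x+1)^m + (m:ℝ)*(x-1)^(j+c+1)*(x+1)^(m-1) := by
  simp only [dmon, show j+c+1+m - (j+c+1) = m from by omega,
    show j+c+1-1 = j+c from by omega, show j+c+1+m - (j+c+1) - 1 = m - 1 from by omega]
  push_cast
  ring

lemma dmonH2 (j c m : ℕ) (x : ℝ) :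
    dmon (j+c+1+m) j x
      = (j:ℝ)*(x-1)^(j-1)*(x+1)^(c+1+m) + ((c:ℝ)+1+m)*(x-1)^j*(x+1)^(c+m) := by
  simp only [dmon, show j+c+1+m - j = c+1+m from by omega,
    show c+1+m-1 = c+m from by omega]
  push_cast
  ring

lemma dmonH3 (j c m : ℕ) (x : ℝ) :
    dmon (j+c+1+m) (c+1+m) x
      = ((c:ℝ)+1+m)*(x-1)^(c+m)*(x+1)^j + (j:ℝ)*(x-1)^(c+1+m)*(x+1)^(j-1) := by
  simp only [dmon, show j+c+1+m - (c+1+m) = j from by omega,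
    show c+1+m-1 = c+m from by omega, show j+c+1+m - (c+1+m) - 1 = j - 1 from by omega]
  push_cast
  ring

lemma dmonH4 (j c m : ℕ) (x : ℝ) :
    dmon (j+c+1+m) m x
      = (m:ℝ)*(x-1)^(m-1)*(x+1)^(j+c+1) + ((j:ℝ)+c+1)*(x-1)^m*(x+1)^(j+c) := by
  simp only [dmon, show j+c+1+m - m = j+c+1 from by omega,
    show j+c+1-1 = j+c from by omega]
  push_cast
  ring

lemma four_aux {α₁ α₂ : ℝ} (h1 : -1 < α₁) (h12 : α₁ ≤ α₂) (n : ℕ) (x : ℝ) (hx : 1 ≤ x)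
    (k j : ℕ) (hk : k ≤ n) (hj : j ≤ n) (hjk : j ≤ k) :
    (bco α₂ n k * bco α₁ n j - bco α₁ n k * bco α₂ n j) * (dmon n k x * ((x-1)^j * (x+1)^(n-j)))
    + (bco α₂ n j * bco α₁ n k - bco α₁ n j * bco α₂ n k) * (dmon n j x * ((x-1)^k * (x+1)^(n-k)))
    + (bco α₂ n (n-j) * bco α₁ n (n-k) - bco α₁ n (n-j) * bco α₂ n (n-k)) *
        (dmon n (n-j) x * ((x-1)^(n-k) * (x+1)^(n-(n-k))))
    + (bco α₂ n (n-k) * bco α₁ n (n-j) - bco α₁ n (n-k) * bco α₂ n (n-j)) *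
        (dmon n (n-k) x * ((x-1)^(n-j) * (x+1)^(n-(n-j)))) ≤ 0 := by
  rcases Nat.eq_or_lt_of_le hjk with rfl | hlt
  · exact le_of_eq (by ring)
  · obtain ⟨c, rfl⟩ : ∃ c, k = j+c+1 := ⟨k-j-1, by omega⟩
    obtain ⟨m, rfl⟩ : ∃ m, n = j+c+1+m := ⟨n-(j+c+1), by omega⟩
    rw [show j+c+1+m - (j+c+1) = m from by omega,
        show j+c+1+m - j = c+1+m from by omega,
        show j+c+1+m - m = j+c+1 from by omega,
        show j+c+1+m - (c+1+m) = j from by omega]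
    have e1a : bco α₂ (j+c+1+m) (c+1+m) = bco α₂ (j+c+1+m) j := by
      rw [show c+1+m = j+c+1+m - j from by omega]
      exact bco_symm α₂ (j+c+1+m) j (by omega)
    have e1b : bco α₁ (j+c+1+m) (c+1+m) = bco α₁ (j+c+1+m) j := by
      rw [show c+1+m = j+c+1+m - j from by omega]
      exact bco_symm α₁ (j+c+1+m) j (by omega)
    have e2a : bco α₁ (j+c+1+m) m = bco α₁ (j+c+1+m) (j+c+1) := by
      have := bco_symm α₁ (j+c+1+m) (j+c+1) (by omega)
      rwa [show j+c+1+m - (j+c+1) = m from by omega] at this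
    have e2b : bco α₂ (j+c+1+m) m = bco α₂ (j+c+1+m) (j+c+1) := by
      have := bco_symm α₂ (j+c+1+m) (j+c+1) (by omega)
      rwa [show j+c+1+m - (j+c+1) = m from by omega] at this
    rw [e1a, e1b, e2a, e2b]
    rcases le_total j m with hjm | hmj
    · have hΔ : bco α₂ (j+c+1+m) (j+c+1) * bco α₁ (j+c+1+m) j
          - bco α₁ (j+c+1+m) (j+c+1) * bco α₂ (j+c+1+m) j ≤ 0 := by
        have h := delta_nonpos h1 h12 (j+c+1+m) j (c+1) (by omega)
        rw [show j+(c+1) = j+c+1 from by omega] at h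
        linarith
      have hBr : (0:ℝ) ≤ 2*((c:ℝ)+1)*((x-1)^(2*j+c)*(x+1)^(2*m+c)
          - (x-1)^(2*m+c)*(x+1)^(2*j+c)) := by
        have hp := pow_pair hx (show 2*j+c ≤ 2*m+c by omega)
        have h2 : (0:ℝ) ≤ 2*((c:ℝ)+1) := by positivity
        exact mul_nonneg h2 (sub_nonneg.2 hp)
      refine le_trans (le_of_eq ?_) (mul_nonpos_of_nonpos_of_nonneg hΔ hBr)
      rw [dmonH1, dmonH2, dmonH3, dmonH4]
      rcases j with _ | j <;> rcases m with _ | m <;>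
        · simp only [Nat.add_sub_cancel, Nat.zero_sub, Nat.cast_zero]
          push_cast
          ring
    · have hΔ : (0:ℝ) ≤ bco α₂ (j+c+1+m) (j+c+1) * bco α₁ (j+c+1+m) j
          - bco α₁ (j+c+1+m) (j+c+1) * bco α₂ (j+c+1+m) j := by
        have h := delta_nonpos h1 h12 (j+c+1+m) m (c+1) (by omega)
        rw [show m+(c+1) = c+1+m from by omega] at h
        rw [e1a, e1b, e2a, e2b] at h
        linarith
      have hBr : 2*((c:ℝ)+1)*((x-1)^(2*j+c)*(x+1)^(2*m+c)
          - (x-1)^(2*m+c)*(x+1)^(2*j+c)) ≤ 0 := by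
        have hp := pow_pair hx (show 2*m+c ≤ 2*j+c by omega)
        have h2 : (0:ℝ) ≤ 2*((c:ℝ)+1) := by positivity
        have := mul_nonneg h2 (sub_nonneg.2 hp)
        nlinarith [this]
      refine le_trans (le_of_eq ?_) (mul_nonpos_of_nonneg_of_nonpos hΔ hBr)
      rw [dmonH1, dmonH2, dmonH3, dmonH4]
      rcases j with _ | j <;> rcases m with _ | m <;>
        · simp only [Nat.add_sub_cancel, Nat.zero_sub, Nat.cast_zero]
          push_cast
          ring

lemma four_nonpos {α₁ α₂ : ℝ} (h1 : -1 < α₁) (h12 : α₁ ≤ α₂) (n : ℕ) (x : ℝ) (hx : 1 ≤ x)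
    (k j : ℕ) (hk : k ≤ n) (hj : j ≤ n) :
    (bco α₂ n k * bco α₁ n j - bco α₁ n k * bco α₂ n j) * (dmon n k x * ((x-1)^j * (x+1)^(n-j)))
    + (bco α₂ n j * bco α₁ n k - bco α₁ n j * bco α₂ n k) * (dmon n j x * ((x-1)^k * (x+1)^(n-k)))
    + (bco α₂ n (n-j) * bco α₁ n (n-k) - bco α₁ n (n-j) * bco α₂ n (n-k)) *
        (dmon n (n-j) x * ((x-1)^(n-k) * (x+1)^(n-(n-k))))
    + (bco α₂ n (n-k) * bco α₁ n (n-j) - bco α₁ n (n-k) * bco α₂ n (n-j)) *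
        (dmon n (n-k) x * ((x-1)^(n-j) * (x+1)^(n-(n-j)))) ≤ 0 := by
  rcases le_total j k with h | h
  · exact four_aux h1 h12 n x hx k j hk hj h
  · have := four_aux h1 h12 n x hx j k hj hk h
    linarith

lemma key_ineq {α₁ α₂ : ℝ} (h1 : -1 < α₁) (h12 : α₁ ≤ α₂) (n : ℕ) {x : ℝ} (hx : 1 ≤ x) :
    Sd α₂ n x * Sf α₁ n x ≤ Sd α₁ n x * Sf α₂ n x := by
  rw [← sub_nonpos]
  have expand : Sd α₂ n x * Sf α₁ n x - Sd α₁ n x * Sf α₂ n x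
      = ∑ k ∈ Finset.range (n+1), ∑ j ∈ Finset.range (n+1),
          ((bco α₂ n k * bco α₁ n j - bco α₁ n k * bco α₂ n j)
            * (dmon n k x * ((x-1)^j * (x+1)^(n-j)))) := by
    unfold Sd Sf
    rw [Finset.sum_mul_sum, Finset.sum_mul_sum, ← Finset.sum_sub_distrib]
    apply Finset.sum_congr rfl
    intro k _
    rw [← Finset.sum_sub_distrib]
    apply Finset.sum_congr rfl
    intro j _
    ring
  rw [expand]
  set F : ℕ → ℕ → ℝ := fun k j => (bco α₂ n k * bco α₁ n j - bco α₁ n k * bco α₂ n j)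
      * (dmon n k x * ((x-1)^j * (x+1)^(n-j))) with hF
  have hrefl : ∀ (G : ℕ → ℝ), ∑ k ∈ Finset.range (n+1), G k
      = ∑ k ∈ Finset.range (n+1), G (n-k) := by
    intro G
    have := Finset.sum_range_reflect G (n+1)
    simp only [Nat.add_sub_cancel] at this
    exact this.symm
  have hcomm : ∑ k ∈ Finset.range (n+1), ∑ j ∈ Finset.range (n+1), F k j
      = ∑ k ∈ Finset.range (n+1), ∑ j ∈ Finset.range (n+1), F j k := Finset.sum_comm
  have h2 : ∑ k ∈ Finset.range (n+1), ∑ j ∈ Finset.range (n+1), F k j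
      = ∑ k ∈ Finset.range (n+1), ∑ j ∈ Finset.range (n+1), F (n-k) (n-j) := by
    rw [hrefl (fun k => ∑ j ∈ Finset.range (n+1), F k j)]
    apply Finset.sum_congr rfl
    intro k _
    exact hrefl (fun j => F (n-k) j)
  have h3 : ∑ k ∈ Finset.range (n+1), ∑ j ∈ Finset.range (n+1), F k j
      = ∑ k ∈ Finset.range (n+1), ∑ j ∈ Finset.range (n+1), F (n-j) (n-k) := by
    rw [h2]
    exact Finset.sum_comm
  have hgroup : ∑ k ∈ Finset.range (n+1), ∑ j ∈ Finset.range (n+1),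
      (F k j + F j k + F (n-j) (n-k) + F (n-k) (n-j)) ≤ 0 := by
    apply Finset.sum_nonpos
    intro k hk
    apply Finset.sum_nonpos
    intro j hj
    simp only [Finset.mem_range] at hk hj
    exact four_nonpos h1 h12 n x hx k j (by omega) (by omega)
  have hsplit : ∑ k ∈ Finset.range (n+1), ∑ j ∈ Finset.range (n+1),
      (F k j + F j k + F (n-j) (n-k) + F (n-k) (n-j))
      = (∑ k ∈ Finset.range (n+1), ∑ j ∈ Finset.range (n+1), F k j)
        + (∑ k ∈ Finset.range (n+1), ∑ j ∈ Finset.range (n+1), F j k)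
        + (∑ k ∈ Finset.range (n+1), ∑ j ∈ Finset.range (n+1), F (n-j) (n-k))
        + (∑ k ∈ Finset.range (n+1), ∑ j ∈ Finset.range (n+1), F (n-k) (n-j)) := by
    simp only [Finset.sum_add_distrib]
  rw [hsplit, ← hcomm, ← h2, ← h3] at hgroup
  linarith


lemma ratio_eq (lam : ℝ) (hl : -(1/2) < lam) (n : ℕ) (x : ℝ) :
    uRatio lam n x = Sd (lam - 1/2) n x / Sf (lam - 1/2) n x := by
  rcases eq_or_ne lam 0 with rfl | hne
  · have hDc : (0:ℝ) < Dc n := Finset.prod_pos (fun i _ => by positivity)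
    have hNc : (0:ℝ) < Nc n := Finset.prod_pos (fun i _ => by positivity)
    have hfun : ultra 0 n = fun y => (Nc n / Dc n) * Sf (-(1/2)) n y := by
      funext y
      simp only [ultra, if_pos rfl, if_true]
      rw [div_mul_eq_mul_div, eq_div_iff hDc.ne']
      linear_combination cheb_eq' n y
    rw [uRatio, hfun]
    rw [(((hasDerivAt_Sf (-(1/2)) n x)).const_mul (Nc n / Dc n)).deriv]
    rw [show (0:ℝ) - 1/2 = -(1/2) by norm_num]
    rw [mul_div_mul_left _ _ (by positivity : Nc n / Dc n ≠ 0)]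
  · have hDg : (0:ℝ) < Dg lam n := by
      apply Finset.prod_pos
      intro i _
      have : (0:ℝ) ≤ (i:ℝ) := Nat.cast_nonneg i
      linarith
    have hNg : Ng lam n ≠ 0 := by
      rw [Ng, Finset.prod_ne_zero_iff]
      intro i _
      rcases Nat.eq_zero_or_pos i with rfl | hi
      · simpa using fun h => hne (by linarith)
      · have : (1:ℝ) ≤ (i:ℝ) := by exact_mod_cast hi
        intro h
        linarith
    have hfun : ultra lam n = fun y => (Ng lam n / Dg lam n) * Sf (lam - 1/2) n y := by
      funext y
      simp only [ultra, if_neg hne]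
      rw [div_mul_eq_mul_div, eq_div_iff hDg.ne']
      linear_combination gegen_eq' lam n y
    rw [uRatio, hfun]
    rw [(((hasDerivAt_Sf (lam - 1/2) n x)).const_mul (Ng lam n / Dg lam n)).deriv]
    rw [mul_div_mul_left _ _ (div_ne_zero hNg hDg.ne')]

theorem ultra_ratio_antitone_in_lambda (n : ℕ) (hn : 1 ≤ n) (x : ℝ) (hx : 1 ≤ x)
    (lam₁ lam₂ : ℝ) (h1 : -(1 / 2) < lam₁) (h12 : lam₁ ≤ lam₂) :
    uRatio lam₂ n x ≤ uRatio lam₁ n x := by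
  have h2 : -(1/2) < lam₂ := lt_of_lt_of_le h1 h12
  have ha1 : (-1:ℝ) < lam₁ - 1/2 := by linarith
  have ha2 : (-1:ℝ) < lam₂ - 1/2 := by linarith
  have ha12 : lam₁ - 1/2 ≤ lam₂ - 1/2 := by linarith
  rw [ratio_eq lam₁ h1 n x, ratio_eq lam₂ h2 n x]
  rw [div_le_div_iff₀ (Sf_pos ha2 n hx) (Sf_pos ha1 n hx)]
  exact key_ineq ha1 ha12 n hx
end

section
/- Let n ∈ ℕ, n ≥ 1, and λ ≥ 1. Then for every real x ≥ 1, u_n(x) = (P_n^{(λ)})'(x)/P_n^{(λ)}(x) ≤ n²/(x + (n-1)√(x²-1)). -/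
noncomputable def gegenD (lam : ℝ) : ℕ → ℝ → ℝ
  | 0 => fun _ => 0
  | 1 => fun _ => 2 * lam
  | n + 2 => fun x =>
      (2 * ((n : ℝ) + 1 + lam) * (gegenRec lam (n + 1) x + x * gegenD lam (n + 1) x) -
        ((n : ℝ) + 2 * lam) * gegenD lam n x) / ((n : ℝ) + 2)

lemma gegenRec_rec (lam : ℝ) (n : ℕ) (x : ℝ) :
    ((n : ℝ) + 2) * gegenRec lam (n + 2) x =
      2 * ((n : ℝ) + 1 + lam) * x * gegenRec lam (n + 1) x -
        ((n : ℝ) + 2 * lam) * gegenRec lam n x := by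
  have h : ((n : ℝ) + 2) ≠ 0 := by positivity
  simp only [gegenRec]
  field_simp

lemma gegenD_rec (lam : ℝ) (n : ℕ) (x : ℝ) :
    ((n : ℝ) + 2) * gegenD lam (n + 2) x =
      2 * ((n : ℝ) + 1 + lam) * (gegenRec lam (n + 1) x + x * gegenD lam (n + 1) x) -
        ((n : ℝ) + 2 * lam) * gegenD lam n x := by
  have h : ((n : ℝ) + 2) ≠ 0 := by positivity
  simp only [gegenD]
  field_simp

lemma gegen_hasDerivAt (lam : ℝ) (n : ℕ) (x : ℝ) :
    HasDerivAt (gegenRec lam n) (gegenD lam n x) x := by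
  induction n using Nat.strong_induction_on generalizing x with
  | _ n ih =>
    match n with
    | 0 => simpa [gegenRec, gegenD] using hasDerivAt_const x (1 : ℝ)
    | 1 =>
      have := (hasDerivAt_id x).const_mul (2 * lam)
      simpa [gegenRec, gegenD] using this
    | (k + 2) =>
      have h1 := ih (k + 1) (by omega) x
      have h0 := ih k (by omega) x
      have hx : HasDerivAt (fun y : ℝ => 2 * ((k : ℝ) + 1 + lam) * y)
          (2 * ((k : ℝ) + 1 + lam)) x := by
        simpa using (hasDerivAt_id x).const_mul (2 * ((k : ℝ) + 1 + lam))
      have hmul := hx.mul h1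
      have hsub := hmul.sub (h0.const_mul ((k : ℝ) + 2 * lam))
      have hdiv := hsub.div_const ((k : ℝ) + 2)
      have hval : (2 * ((k : ℝ) + 1 + lam) * gegenRec lam (k + 1) x +
            2 * ((k : ℝ) + 1 + lam) * x * gegenD lam (k + 1) x -
            ((k : ℝ) + 2 * lam) * gegenD lam k x) / ((k : ℝ) + 2) = gegenD lam (k + 2) x := by
        simp only [gegenD]; ring
      rw [← hval]
      exact hdiv

lemma gegen_pos_mono (lam x : ℝ) (hlam : 1 ≤ lam) (hx : 1 ≤ x) (n : ℕ) :
    0 < gegenRec lam n x ∧ gegenRec lam n x ≤ gegenRec lam (n + 1) x := by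
  induction n with
  | zero =>
    constructor
    · simp [gegenRec]
    · simp only [gegenRec]; nlinarith
  | succ k ih =>
    obtain ⟨h0, h01⟩ := ih
    have hP1 : 0 < gegenRec lam (k + 1) x := h0.trans_le h01
    refine ⟨hP1, ?_⟩
    have hrec := gegenRec_rec lam k x
    have hk : (0 : ℝ) ≤ (k : ℝ) := Nat.cast_nonneg k
    have h2 : ((k : ℝ) + 2) * gegenRec lam (k + 1) x ≤ ((k : ℝ) + 2) * gegenRec lam (k + 2) x := by
      nlinarith [mul_le_mul_of_nonneg_left h01 (show (0:ℝ) ≤ (k : ℝ) + 2 * lam by nlinarith),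
        mul_pos (show (0:ℝ) < 2 * ((k : ℝ) + 1 + lam) by nlinarith) hP1]
    exact le_of_mul_le_mul_left h2 (by positivity)

lemma gegen_pos (lam x : ℝ) (hlam : 1 ≤ lam) (hx : 1 ≤ x) (n : ℕ) :
    0 < gegenRec lam n x := (gegen_pos_mono lam x hlam hx n).1

lemma gegenJ (lam x : ℝ) (n : ℕ) :
    (x ^ 2 - 1) * gegenD lam (n + 1) x =
      ((n : ℝ) + 1) * x * gegenRec lam (n + 1) x - ((n : ℝ) + 2 * lam) * gegenRec lam n x := by
  induction n using Nat.strong_induction_on with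
  | _ n ih =>
    match n with
    | 0 => simp only [gegenRec, gegenD]; push_cast; ring
    | 1 => simp only [gegenRec, gegenD]; push_cast; field_simp; ring
    | (m + 2) =>
      have hJ0 := ih m (by omega)
      have hJ1 := ih (m + 1) (by omega)
      have hD := gegenD_rec lam (m + 1) x
      have hP1 := gegenRec_rec lam (m + 1) x
      have hP0 := gegenRec_rec lam m x
      rw [show m + 1 + 2 = m + 3 from rfl] at hD hP1
      rw [show m + 1 + 1 = m + 2 from rfl] at hD hP1 hJ1
      rw [show m + 2 + 1 = m + 3 from rfl]
      push_cast at hD hP1 hJ1 ⊢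
      have h3 : ((m : ℝ) + 3) ≠ 0 := by positivity
      apply mul_left_cancel₀ h3
      linear_combination (x ^ 2 - 1) * hD +
        (2 * ((m : ℝ) + 2 + lam) * x) * hJ1 +
        (-((m : ℝ) + 1 + 2 * lam)) * hJ0 - (((m : ℝ) + 3) * x) * hP1 +
        (((m : ℝ) + 1 + 2 * lam)) * hP0

lemma gegenK (lam x s : ℝ) (hlam : 1 ≤ lam) (hx : 1 ≤ x) (hs : 0 ≤ s)
    (hx2 : x ^ 2 = s ^ 2 + 1) (n : ℕ) :
    ((n : ℝ) + 1) * (x + ((n : ℝ) + 1) * s) * gegenRec lam (n + 1) x ≤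
      ((n : ℝ) + 2 * lam) * ((x + s) * (x + (n : ℝ) * s)) * gegenRec lam n x := by
  induction n with
  | zero =>
    norm_num [gegenRec]
    exact le_of_eq (by ring)
  | succ n ih =>
    have hkn : (0 : ℝ) ≤ (n : ℝ) := Nat.cast_nonneg n
    have hns : (0 : ℝ) ≤ (n : ℝ) * s := mul_nonneg hkn hs
    have hAs : (0 : ℝ) < (x + s) * (x + (n : ℝ) * s) := by nlinarith
    have hC : (0 : ℝ) < x + ((n : ℝ) + 2) * s := by nlinarith
    have hP1 : 0 < gegenRec lam (n + 1) x := gegen_pos lam x hlam hx (n + 1)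
    have hrec := gegenRec_rec lam n x
    have hId : ((n:ℝ)+1)*(x+((n:ℝ)+1)*s)*(x+((n:ℝ)+2)*s) +
        ((n:ℝ)+1+2*lam)*((x+s)*(x+((n:ℝ)+1)*s))*((x+s)*(x+(n:ℝ)*s)) -
        2*((n:ℝ)+1+lam)*x*((x+s)*(x+(n:ℝ)*s))*(x+((n:ℝ)+2)*s) =
        2*lam*((n:ℝ)+1)*s^2 + 2*(lam-1)*((n:ℝ)+1)^2*s^4 + 2*(lam-1)*((n:ℝ)+1)^2*x*s^3 := by
      linear_combination (-(((n:ℝ)+1)^2*s^2) - ((n:ℝ)+1)^3*s^2 + 2*lam*((n:ℝ)+1)*s^2 -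
        ((n:ℝ)+1)*x*s - 2*((n:ℝ)+1)^2*x*s - ((n:ℝ)+1)*x^2) * hx2
    have hR : (0:ℝ) ≤ 2*lam*((n:ℝ)+1)*s^2 + 2*(lam-1)*((n:ℝ)+1)^2*s^4 +
        2*(lam-1)*((n:ℝ)+1)^2*x*s^3 := by
      have t1 : (0:ℝ) ≤ 2*lam*((n:ℝ)+1)*s^2 :=
        mul_nonneg (mul_nonneg (by linarith) (by positivity)) (sq_nonneg s)
      have t2 : (0:ℝ) ≤ 2*(lam-1)*((n:ℝ)+1)^2*s^4 :=
        mul_nonneg (mul_nonneg (by linarith) (by positivity)) (by positivity)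
      have t3 : (0:ℝ) ≤ 2*(lam-1)*((n:ℝ)+1)^2*x*s^3 :=
        mul_nonneg (mul_nonneg (mul_nonneg (by linarith) (by positivity)) (by linarith))
          (by positivity)
      linarith
    have hpoly : 2*((n:ℝ)+1+lam)*x*((x+s)*(x+(n:ℝ)*s))*(x+((n:ℝ)+2)*s) ≤
        ((n:ℝ)+1)*(x+((n:ℝ)+1)*s)*(x+((n:ℝ)+2)*s) +
        ((n:ℝ)+1+2*lam)*((x+s)*(x+((n:ℝ)+1)*s))*((x+s)*(x+(n:ℝ)*s)) := by linarith
    have f3 := mul_le_mul_of_nonneg_right hpoly hP1.le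
    have f1 : ((x+s)*(x+(n:ℝ)*s)) * ((((n:ℝ)+2))*((x+((n:ℝ)+2)*s))*gegenRec lam (n+2) x) =
        (x+((n:ℝ)+2)*s) * (2*((n:ℝ)+1+lam)*x*((x+s)*(x+(n:ℝ)*s))*gegenRec lam (n+1) x) -
        (x+((n:ℝ)+2)*s) * (((n:ℝ)+2*lam)*((x+s)*(x+(n:ℝ)*s))*gegenRec lam n x) := by
      linear_combination (((x+s)*(x+(n:ℝ)*s))*(x+((n:ℝ)+2)*s)) * hrec
    have f2 := mul_le_mul_of_nonneg_left ih hC.le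
    have hfin : ((x+s)*(x+(n:ℝ)*s)) *
        ((((n:ℝ)+1)+1)*(x+(((n:ℝ)+1)+1)*s)*gegenRec lam (n+2) x) ≤
        ((x+s)*(x+(n:ℝ)*s)) *
        ((((n:ℝ)+1)+2*lam)*((x+s)*(x+((n:ℝ)+1)*s))*gegenRec lam (n+1) x) := by
      linarith [f1, f2, f3]
    have := le_of_mul_le_mul_left hfin hAs
    push_cast
    linarith [this]

lemma gegen_ratio_one (lam : ℝ) (n : ℕ) :
    ((n : ℝ) + 1) * gegenRec lam (n + 1) 1 = ((n : ℝ) + 2 * lam) * gegenRec lam n 1 := by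
  have h := gegenJ lam 1 n
  norm_num at h
  linarith

lemma gegenD_one (lam : ℝ) (n : ℕ) :
    (2 * lam + 1) * gegenD lam n 1 = (n : ℝ) * ((n : ℝ) + 2 * lam) * gegenRec lam n 1 := by
  induction n using Nat.strong_induction_on with
  | _ n ih =>
    match n with
    | 0 => simp [gegenD]
    | 1 => simp only [gegenD, gegenRec]; push_cast; ring
    | (m + 2) =>
      have ih1 := ih (m + 1) (by omega)
      have ih0 := ih m (by omega)
      have hD := gegenD_rec lam m 1
      have hr0 := gegen_ratio_one lam m
      have hr1 := gegen_ratio_one lam (m + 1)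
      rw [show m + 1 + 1 = m + 2 from rfl] at hr1
      push_cast at ih1 hr1 ⊢
      have h2 : ((m : ℝ) + 2) ≠ 0 := by positivity
      apply mul_left_cancel₀ h2
      linear_combination (2*lam+1)*hD + 2*((m:ℝ)+1+lam)*ih1 - ((m:ℝ)+2*lam)*ih0 +
        ((m:ℝ)*((m:ℝ)+2*lam))*hr0 - (((m:ℝ)+2)*((m:ℝ)+2+2*lam))*hr1

theorem ultra_ratio_upper_bound_lambda_ge_one (n : ℕ) (hn : 1 ≤ n) (lam : ℝ) (hlam : 1 ≤ lam)
    (x : ℝ) (hx : 1 ≤ x) :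
    uRatio lam n x ≤ (n : ℝ) ^ 2 / (x + ((n : ℝ) - 1) * Real.sqrt (x ^ 2 - 1)) := by
  have hlam0 : lam ≠ 0 := by linarith
  have hu : ultra lam n = gegenRec lam n := if_neg hlam0
  have hderiv : deriv (gegenRec lam n) x = gegenD lam n x :=
    (gegen_hasDerivAt lam n x).deriv
  have hPpos := gegen_pos lam x hlam hx n
  simp only [uRatio, hu, hderiv]
  set s := Real.sqrt (x ^ 2 - 1) with hs_def
  have hs0 : 0 ≤ s := Real.sqrt_nonneg _
  have hs2 : s ^ 2 = x ^ 2 - 1 := Real.sq_sqrt (by nlinarith)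
  have hx2 : x ^ 2 = s ^ 2 + 1 := by linarith
  have hn1 : (1 : ℝ) ≤ (n : ℝ) := by exact_mod_cast hn
  have hden : 0 < x + ((n : ℝ) - 1) * s := by
    nlinarith [mul_nonneg (show (0:ℝ) ≤ (n:ℝ) - 1 by linarith) hs0]
  rw [div_le_div_iff₀ hPpos hden]
  obtain ⟨k, rfl⟩ : ∃ k, n = k + 1 := ⟨n - 1, by omega⟩
  have hkn : (0 : ℝ) ≤ (k : ℝ) := Nat.cast_nonneg k
  by_cases hx1 : x = 1
  · subst hx1
    have hs0' : s = 0 := by rw [hs_def]; norm_num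
    rw [hs0']
    have hDone := gegenD_one lam (k + 1)
    have hP := gegen_pos lam 1 hlam le_rfl (k + 1)
    push_cast at hDone ⊢
    nlinarith [hDone, hP, mul_nonneg (mul_nonneg (mul_nonneg (show (0:ℝ) ≤ 2*lam by linarith)
      hkn) (show (0:ℝ) ≤ (k:ℝ)+1 by linarith)) hP.le]
  · have hx1' : 1 < x := lt_of_le_of_ne hx (Ne.symm hx1)
    have hspos : 0 < s := Real.sqrt_pos.mpr (by nlinarith)
    have hK := gegenK lam x s hlam hx hs0 hx2 k
    have hP1 := gegen_pos lam x hlam hx (k + 1)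
    have hJ' : s ^ 2 * gegenD lam (k + 1) x =
        ((k : ℝ) + 1) * x * gegenRec lam (k + 1) x - ((k : ℝ) + 2 * lam) * gegenRec lam k x := by
      rw [hs2]; exact gegenJ lam x k
    have hid : x * (x + s) * (x + (k : ℝ) * s) - (x + ((k : ℝ) + 1) * s) =
        ((k : ℝ) + 1) * s ^ 2 * (x + s) := by
      linear_combination (x + ((k : ℝ) + 1) * s) * hx2
    have h1 : s ^ 2 * (x + s) * (gegenD lam (k + 1) x * (x + (k : ℝ) * s)) =
        (x + s) * (x + (k : ℝ) * s) * (((k : ℝ) + 1) * x * gegenRec lam (k + 1) x) -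
        (x + s) * (x + (k : ℝ) * s) * (((k : ℝ) + 2 * lam) * gegenRec lam k x) := by
      linear_combination ((x + s) * (x + (k : ℝ) * s)) * hJ'
    have h4 : ((k : ℝ) + 1) * gegenRec lam (k + 1) x *
        (x * (x + s) * (x + (k : ℝ) * s) - (x + ((k : ℝ) + 1) * s)) =
        ((k : ℝ) + 1) * gegenRec lam (k + 1) x * (((k : ℝ) + 1) * s ^ 2 * (x + s)) := by
      rw [hid]
    have h5 : s ^ 2 * (x + s) * (gegenD lam (k + 1) x * (x + (k : ℝ) * s)) ≤
        s ^ 2 * (x + s) * (((k : ℝ) + 1) ^ 2 * gegenRec lam (k + 1) x) := by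
      linarith [h1, hK, h4]
    have hpos : 0 < s ^ 2 * (x + s) := mul_pos (pow_pos hspos 2) (by linarith)
    have h6 := le_of_mul_le_mul_left h5 hpos
    push_cast
    linarith [h6]
end
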